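/- Let t, p be positive integers with p ≥ t, let H̃ ∈ ℝ^{t×t} be invertible and J̃ ∈ ℝ^{p×t}. Then there exist orthogonal matrices V_J ∈ ℝ^{p×p} and V_H ∈ ℝ^{t×t}, an invertible matrix X ∈ ℝ^{t×t}, and real numbers 0 ≤ α₁ ≤ … ≤ α_t < 1 and 1 ≥ β₁ ≥ … ≥ β_t > 0 with α_i² + β_i² = 1 for all i, such that V_J^T J̃ X is the p×t matrix whose top t×t block is diag(α₁,…,α_t) and whose remaining rows are zero, and V_H^T H̃ X = diag(β₁,…,β_t). -/

import Mathlib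

open Matrix

/-- **Existence of the Generalized Singular Value Decomposition (GSVD).**
Given an invertible `H̃ ∈ ℝ^{t×t}` and `J̃ ∈ ℝ^{p×t}` with `p ≥ t`, there exist orthogonal
`V_J ∈ ℝ^{p×p}`, `V_H ∈ ℝ^{t×t}`, an invertible `X ∈ ℝ^{t×t}`, and reals
`0 ≤ α₁ ≤ … ≤ α_t < 1`, `1 ≥ β₁ ≥ … ≥ β_t > 0` with `αᵢ² + βᵢ² = 1`, such that
`V_Jᵀ J̃ X` is the `p×t` matrix whose top `t×t` block is `diag(α)` (zero rows below) and
`V_Hᵀ H̃ X = diag(β)`. -/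
theorem gsvd_existence (t p : ℕ) (ht : 0 < t) (htp : t ≤ p)
    (Htil : Matrix (Fin t) (Fin t) ℝ) (hH : IsUnit Htil.det)
    (Jtil : Matrix (Fin p) (Fin t) ℝ) :
    ∃ (VJ : Matrix (Fin p) (Fin p) ℝ) (VH : Matrix (Fin t) (Fin t) ℝ)
      (X : Matrix (Fin t) (Fin t) ℝ) (α β : Fin t → ℝ),
      VJᵀ * VJ = 1 ∧ VHᵀ * VH = 1 ∧ IsUnit X.det ∧
      Monotone α ∧ Antitone β ∧
      (∀ i, 0 ≤ α i) ∧ (∀ i, α i < 1) ∧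
      (∀ i, 0 < β i) ∧ (∀ i, β i ≤ 1) ∧
      (∀ i, α i ^ 2 + β i ^ 2 = 1) ∧
      VJᵀ * Jtil * X = Matrix.of (fun (i : Fin p) (j : Fin t) => if (i : ℕ) = (j : ℕ) then α j else 0) ∧
      VHᵀ * Htil * X = diagonal β := by
  classical
  set Hinv := Htil⁻¹ with hHinvdef
  have hHH : Htil * Hinv = 1 := Matrix.mul_nonsing_inv Htil hH
  have hHH' : Hinv * Htil = 1 := Matrix.nonsing_inv_mul Htil hH
  set K := Jtil * Hinv with hKdef
  have hPSD : (Kᴴ * K).PosSemidef := Matrix.posSemidef_conjTranspose_mul_self K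
  have hM : (Kᴴ * K).IsHermitian := hPSD.1
  set eig := hM.eigenvalues with heigdef
  have hnn : ∀ i, 0 ≤ eig i := fun i => hPSD.eigenvalues_nonneg i
  set U₀ : Matrix (Fin t) (Fin t) ℝ :=
    (Matrix.IsHermitian.eigenvectorUnitary hM : Matrix (Fin t) (Fin t) ℝ) with hU₀def
  have hstar : star U₀ = U₀ᵀ := by
    rw [Matrix.star_eq_conjTranspose, Matrix.conjTranspose_eq_transpose_of_trivial]
  have hdiag0 : U₀ᵀ * (Kᴴ * K) * U₀ = diagonal eig := by
    have h1 : star U₀ * (Kᴴ * K) * U₀ = diagonal (RCLike.ofReal ∘ eig) := by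
      have h := hM.conjStarAlgAut_star_eigenvectorUnitary
      rw [Unitary.conjStarAlgAut_apply] at h
      exact h
    rw [hstar] at h1
    rw [h1]; congr 1
  have hU₀orth : U₀ᵀ * U₀ = 1 := by
    have := Matrix.mem_unitaryGroup_iff'.mp (Matrix.IsHermitian.eigenvectorUnitary hM).2
    rwa [hstar] at this
  -- sorting
  set e := Tuple.sort eig with hedef
  set d : Fin t → ℝ := eig ∘ e with hddef
  have hdmono : Monotone d := Tuple.monotone_sort eig
  have hd0 : ∀ j, 0 ≤ d j := fun j => hnn (e j)
  set U : Matrix (Fin t) (Fin t) ℝ := U₀.submatrix id ⇑e with hUdef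
  have hsub_mul : ∀ (A B : Matrix (Fin t) (Fin t) ℝ),
      (A.submatrix ⇑e id) * B = (A * B).submatrix ⇑e id := by
    intro A B; ext i j; simp [Matrix.mul_apply]
  have hmul_sub : ∀ {n : Type} [Fintype n] (A : Matrix n (Fin t) ℝ) (B : Matrix (Fin t) (Fin t) ℝ),
      A * (B.submatrix id ⇑e) = (A * B).submatrix id ⇑e := by
    intro n _ A B; ext i j; simp [Matrix.mul_apply]
  have hUT : Uᵀ = U₀ᵀ.submatrix ⇑e id := by
    rw [hUdef, Matrix.transpose_submatrix]
  have hUorth : Uᵀ * U = 1 := by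
    rw [hUT, hUdef, hsub_mul, hmul_sub, hU₀orth]
    ext i j
    simp [Matrix.one_apply, EmbeddingLike.apply_eq_iff_eq]
  have hUdiag : Uᵀ * (Kᴴ * K) * U = diagonal d := by
    rw [hUT, hUdef, hsub_mul, hmul_sub, hsub_mul, Matrix.submatrix_submatrix, hdiag0]
    ext i j
    by_cases h : i = j
    · subst h; simp [Matrix.diagonal_apply_eq, hddef]
    · have h2 : e i ≠ e j := fun hc => h (e.injective hc)
      simp only [Matrix.submatrix_apply, Function.comp_apply, id_eq]
      rw [Matrix.diagonal_apply_ne _ h2, Matrix.diagonal_apply_ne _ h]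
  set B : Matrix (Fin p) (Fin t) ℝ := K * U with hBdef
  have hBtB : Bᵀ * B = diagonal d := by
    have h3 : Kᴴ = Kᵀ := Matrix.conjTranspose_eq_transpose_of_trivial K
    rw [hBdef, Matrix.transpose_mul, Matrix.mul_assoc, ← Matrix.mul_assoc Kᵀ K U, ← h3,
      ← Matrix.mul_assoc, hUdiag]
  have hBcol : ∀ j l : Fin t, (∑ k, B k j * B k l) = if j = l then d j else 0 := by
    intro j l
    have h := congrFun (congrFun hBtB j) l
    rw [Matrix.mul_apply] at h
    simp only [Matrix.transpose_apply] at h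
    rw [h, Matrix.diagonal_apply]
  have hcol0 : ∀ j, d j = 0 → ∀ k, B k j = 0 := by
    intro j hdj k
    have h := hBcol j j
    rw [if_pos rfl, hdj] at h
    have hk := (Finset.sum_eq_zero_iff_of_nonneg
      (fun i _ => mul_self_nonneg (B i j))).mp h k (Finset.mem_univ k)
    exact mul_self_eq_zero.mp hk
  -- the scalars
  set σv : Fin t → ℝ := fun j => Real.sqrt (d j) with hσdef
  set s1 : Fin t → ℝ := fun j => Real.sqrt (1 + d j) with hs1def
  have h1d : ∀ j, (0:ℝ) < 1 + d j := fun j => by linarith [hd0 j]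
  have hs1pos : ∀ j, 0 < s1 j := fun j => Real.sqrt_pos.mpr (h1d j)
  have hs1sq : ∀ j, s1 j * s1 j = 1 + d j := fun j => Real.mul_self_sqrt (h1d j).le
  have hσsq : ∀ j, σv j * σv j = d j := fun j => Real.mul_self_sqrt (hd0 j)
  set β : Fin t → ℝ := fun j => 1 / s1 j with hβdef
  set α : Fin t → ℝ := fun j => σv j / s1 j with hαdef
  have hβpos : ∀ j, 0 < β j := fun j => by
    simp only [hβdef]; exact one_div_pos.mpr (hs1pos j)
  have hs1ge1 : ∀ j, 1 ≤ s1 j := by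
    intro j
    rw [show (1:ℝ) = Real.sqrt 1 by simp]
    exact Real.sqrt_le_sqrt (by linarith [hd0 j])
  have hβle1 : ∀ j, β j ≤ 1 := fun j => by
    simp only [hβdef]; exact (div_le_one (hs1pos j)).mpr (hs1ge1 j)
  have hβanti : Antitone β := by
    intro i j hij
    simp only [hβdef]
    exact one_div_le_one_div_of_le (hs1pos i)
      (Real.sqrt_le_sqrt (by linarith [hdmono hij]))
  have hαnn : ∀ j, 0 ≤ α j := fun j => div_nonneg (Real.sqrt_nonneg _) (hs1pos j).le
  have hαβ : ∀ j, α j ^ 2 + β j ^ 2 = 1 := by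
    intro j
    have e1 : σv j ^ 2 = d j := by rw [sq]; exact hσsq j
    have e2 : s1 j ^ 2 = 1 + d j := by rw [sq]; exact hs1sq j
    simp only [hαdef, hβdef]
    rw [div_pow, div_pow, e1, e2, one_pow, ← add_div, add_comm, div_self (h1d j).ne']
  have hαlt1 : ∀ j, α j < 1 := by
    intro j
    nlinarith [hαβ j, hβpos j, hαnn j, mul_pos (hβpos j) (hβpos j), sq (β j) ▸ sq_nonneg (β j)]
  have hαmono : Monotone α := by
    intro i j hij
    have hdd := hdmono hij
    have hq : d i / (1 + d i) ≤ d j / (1 + d j) := by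
      rw [div_le_div_iff₀ (h1d i) (h1d j)]; nlinarith
    have hi : α i = Real.sqrt (d i / (1 + d i)) := by
      simp only [hαdef, hσdef, hs1def]
      rw [Real.sqrt_div (hd0 i)]
    have hj2 : α j = Real.sqrt (d j / (1 + d j)) := by
      simp only [hαdef, hσdef, hs1def]
      rw [Real.sqrt_div (hd0 j)]
    rw [hi, hj2]
    exact Real.sqrt_le_sqrt hq
  -- Euclidean setup for VJ
  set colB : Fin t → EuclideanSpace ℝ (Fin p) := fun j => WithLp.toLp 2 (fun k => B k j) with hcolBdef
  set v : Fin p → EuclideanSpace ℝ (Fin p) := fun i =>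
    if h : (i : ℕ) < t then (σv ⟨(i : ℕ), h⟩)⁻¹ • colB ⟨(i : ℕ), h⟩ else 0 with hvdef
  set s : Set (Fin p) := {i | ∃ h : (i : ℕ) < t, d ⟨(i : ℕ), h⟩ ≠ 0} with hsdef
  have hinnercol : ∀ j l : Fin t, (inner ℝ (colB j) (colB l) : ℝ) = if j = l then d j else 0 := by
    intro j l
    rw [PiLp.inner_apply]
    simpa [hcolBdef, mul_comm] using hBcol j l
  have horth : Orthonormal ℝ (s.restrict v) := by
    rw [orthonormal_iff_ite]
    rintro ⟨i, hit, hdi⟩ ⟨j, hjt, hdj⟩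
    set i' : Fin t := ⟨(i : ℕ), hit⟩
    set j' : Fin t := ⟨(j : ℕ), hjt⟩
    have hvi : v i = (σv i')⁻¹ • colB i' := by simp only [hvdef]; rw [dif_pos hit]
    have hvj : v j = (σv j')⁻¹ • colB j' := by simp only [hvdef]; rw [dif_pos hjt]
    have : (inner ℝ (s.restrict v ⟨i, hit, hdi⟩) (s.restrict v ⟨j, hjt, hdj⟩) : ℝ)
        = (σv i')⁻¹ * ((σv j')⁻¹ * (if i' = j' then d i' else 0)) := by
      show (inner ℝ (v i) (v j) : ℝ) = _
      rw [hvi, hvj, real_inner_smul_left, real_inner_smul_right, hinnercol]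
    rw [this]
    by_cases hij : i = j
    · subst hij
      have hii : i' = j' := rfl
      rw [if_pos hii, if_pos rfl]
      have hσne : σv i' ≠ 0 := by
        rw [hσdef]
        exact Real.sqrt_ne_zero'.mpr (lt_of_le_of_ne (hd0 i') (Ne.symm hdi))
      field_simp
      exact (div_eq_iff hσne).mpr (hσsq i').symm
    · have hi'j' : i' ≠ j' := by
        intro hc
        have hval : i'.val = j'.val := congrArg Fin.val hc
        exact hij (Fin.ext hval)
      rw [if_neg hi'j', if_neg (by simp [Subtype.ext_iff, hij])]
      simp
  have card : Module.finrank ℝ (EuclideanSpace ℝ (Fin p)) = Fintype.card (Fin p) :=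
    finrank_euclideanSpace
  obtain ⟨b, hb⟩ := horth.exists_orthonormalBasis_extension_of_card_eq card
  have hbo : ∀ i j : Fin p, ∑ k, b i k * b j k = if i = j then (1:ℝ) else 0 := by
    intro i j
    have h2 := orthonormal_iff_ite.mp b.orthonormal i j
    rw [PiLp.inner_apply] at h2
    simpa [mul_comm] using h2
  set VJ : Matrix (Fin p) (Fin p) ℝ := Matrix.of (fun k i => b i k) with hVJdef
  have hVJorth : VJᵀ * VJ = 1 := by
    ext i j
    rw [Matrix.mul_apply, Matrix.one_apply]
    simp only [Matrix.transpose_apply, hVJdef, Matrix.of_apply]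
    exact hbo i j
  -- key computation
  have hVJB : ∀ (i : Fin p) (j : Fin t),
      (∑ k, b i k * B k j) = if (i : ℕ) = (j : ℕ) then σv j else 0 := by
    intro i j
    by_cases hdj : d j = 0
    · have hz : ∀ k, B k j = 0 := hcol0 j hdj
      have hσ0 : σv j = 0 := by rw [hσdef]; simp [hdj]
      simp [hz, hσ0]
    · set j' : Fin p := Fin.castLE htp j with hj'def
      have hjt : ((j' : ℕ)) < t := by simp [hj'def, j.isLt]
      have hjj : (⟨(j' : ℕ), hjt⟩ : Fin t) = j := by ext; simp [hj'def]
      have hj's : j' ∈ s := ⟨hjt, by rw [hjj]; exact hdj⟩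
      have hbj : b j' = v j' := hb j' hj's
      have hσne : σv j ≠ 0 := by
        rw [hσdef]
        exact Real.sqrt_ne_zero'.mpr (lt_of_le_of_ne (hd0 j) (Ne.symm hdj))
      have hBk : ∀ k, B k j = σv j * b j' k := by
        intro k
        have hv : b j' k = (σv j)⁻¹ * B k j := by
          rw [hbj]; simp only [hvdef]; rw [dif_pos hjt, hjj]
          simp [hcolBdef]
        rw [hv]
        field_simp
      calc (∑ k, b i k * B k j) = ∑ k, σv j * (b i k * b j' k) := by
            refine Finset.sum_congr rfl fun k _ => ?_
            rw [hBk k]; ring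
        _ = σv j * ∑ k, b i k * b j' k := by rw [Finset.mul_sum]
        _ = σv j * (if i = j' then 1 else 0) := by rw [hbo i j']
        _ = if (i : ℕ) = (j : ℕ) then σv j else 0 := by
            by_cases hij : (i : ℕ) = (j : ℕ)
            · have : i = j' := Fin.ext (by simp [hj'def, hij])
              rw [if_pos this, if_pos hij, mul_one]
            · have : i ≠ j' := fun hc => hij (by rw [hc]; simp [hj'def])
              rw [if_neg this, if_neg hij, mul_zero]
  -- assembly
  set X : Matrix (Fin t) (Fin t) ℝ := Hinv * (U * diagonal β) with hXdef
  refine ⟨VJ, U, X, α, β, hVJorth, hUorth, ?_, hαmono, hβanti, hαnn, hαlt1, hβpos, hβle1, hαβ,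
    ?_, ?_⟩
  · -- IsUnit X.det
    have hUUT : U * Uᵀ = 1 := mul_eq_one_comm.mp hUorth
    have hdd : diagonal β * diagonal (fun j => (β j)⁻¹) = 1 := by
      rw [Matrix.diagonal_mul_diagonal]
      ext i j
      by_cases h : i = j
      · subst h
        rw [Matrix.diagonal_apply_eq]
        simp [mul_inv_cancel₀ (hβpos i).ne', Matrix.one_apply]
      · rw [Matrix.diagonal_apply_ne _ h, Matrix.one_apply_ne h]
    refine Matrix.isUnit_det_of_right_inverse (B := diagonal (fun j => (β j)⁻¹) * (Uᵀ * Htil)) ?_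
    rw [hXdef]
    calc Hinv * (U * diagonal β) * (diagonal (fun j => (β j)⁻¹) * (Uᵀ * Htil))
        = Hinv * (U * ((diagonal β * diagonal (fun j => (β j)⁻¹)) * (Uᵀ * Htil))) := by
          simp only [Matrix.mul_assoc]
      _ = Hinv * (U * (Uᵀ * Htil)) := by rw [hdd, Matrix.one_mul]
      _ = Hinv * ((U * Uᵀ) * Htil) := by simp only [Matrix.mul_assoc]
      _ = 1 := by rw [hUUT, Matrix.one_mul, hHH']
  · -- VJᵀ * Jtil * X = target
    have hJX : Jtil * X = B * diagonal β := by
      rw [hXdef, hBdef, hKdef]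
      simp only [Matrix.mul_assoc]
    rw [Matrix.mul_assoc, hJX, ← Matrix.mul_assoc]
    ext i j
    rw [Matrix.mul_diagonal, Matrix.mul_apply]
    simp only [Matrix.transpose_apply, hVJdef, Matrix.of_apply]
    rw [hVJB i j]
    by_cases hij : (i : ℕ) = (j : ℕ)
    · rw [if_pos hij, if_pos hij]
      simp only [hαdef, hβdef]
      rw [mul_one_div]
    · rw [if_neg hij, if_neg hij, zero_mul]
  · -- VHᵀ * Htil * X = diagonal β
    rw [hXdef]
    calc Uᵀ * Htil * (Hinv * (U * diagonal β))
        = Uᵀ * ((Htil * Hinv) * (U * diagonal β)) := by simp only [Matrix.mul_assoc]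
      _ = (Uᵀ * U) * diagonal β := by rw [hHH, Matrix.one_mul, ← Matrix.mul_assoc]
      _ = diagonal β := by rw [hUorth, Matrix.one_mul]
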